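/- arXiv:2506.03848 — 3 statements merged into one kernel-verified Lean document; each statement's English description precedes it below -/
import Mathlib

section
/- Let G be a group, H a proper subgroup of G, and g₁, g₂ ∈ G. Then the set product (g₁Hg₁⁻¹)·(g₂Hg₂⁻¹) is not equal to G. In other words, the conjugates of a proper subgroup form an independent set in the comaximal subgroup graph of G. -/
open Pointwise

lemma aux_map_conj_self {G : Type*} [Group G] (K : Subgroup G) {k : G} (hk : k ∈ K) :
    Subgroup.map (MulAut.conj k).toMonoidHom K = K := by
  ext y
  simp only [Subgroup.mem_map, MulAut.conj_apply, MulEquiv.coe_toMonoidHom]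
  constructor
  · rintro ⟨a, ha, rfl⟩
    exact K.mul_mem (K.mul_mem hk ha) (K.inv_mem hk)
  · intro hy
    exact ⟨k⁻¹ * y * k, K.mul_mem (K.mul_mem (K.inv_mem hk) hy) hk, by group⟩

lemma aux_map_conj_mul {G : Type*} [Group G] (K : Subgroup G) (a b : G) :
    Subgroup.map (MulAut.conj (a * b)).toMonoidHom K =
      Subgroup.map (MulAut.conj a).toMonoidHom (Subgroup.map (MulAut.conj b).toMonoidHom K) := by
  rw [Subgroup.map_map]
  congr 1
  ext x
  simp [mul_assoc]

lemma aux_coe_mul_self {G : Type*} [Group G] (K : Subgroup G) :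
    (K : Set G) * (K : Set G) = (K : Set G) := by
  apply Set.Subset.antisymm
  · rintro x ⟨a, ha, b, hb, rfl⟩
    exact K.mul_mem ha hb
  · intro x hx
    exact ⟨x, hx, 1, K.one_mem, mul_one x⟩

lemma aux_key {G : Type*} [Group G] (K : Subgroup G) (x : G)
    (h : (K : Set G) * (Subgroup.map (MulAut.conj x).toMonoidHom K : Set G) = Set.univ) :
    K = ⊤ := by
  set L := Subgroup.map (MulAut.conj x).toMonoidHom K with hL
  have h2 : (L : Set G) * (K : Set G) = Set.univ := by
    have := congrArg (fun s => s⁻¹) h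
    simpa [mul_inv_rev, inv_coe_set] using this
  have hx : x ∈ (L : Set G) * (K : Set G) := by rw [h2]; trivial
  obtain ⟨k, hk, a, ha, hx⟩ := hx
  have hk' : k ∈ L := hk
  have hconj : L = Subgroup.map (MulAut.conj k).toMonoidHom K := by
    rw [hL, ← hx, aux_map_conj_mul, aux_map_conj_self K ha]
  have hKL : K = L := by
    have h3 : Subgroup.map (MulAut.conj k⁻¹).toMonoidHom L = K := by
      rw [hconj, ← aux_map_conj_mul, inv_mul_cancel]
      ext y
      simp [Subgroup.mem_map]
    rw [← h3, aux_map_conj_self L (L.inv_mem hk')]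
  rw [← hKL, aux_coe_mul_self] at h
  exact Subgroup.coe_eq_univ.mp h

theorem stmt_2 {G : Type*} [Group G] (H : Subgroup G) (hH : H ≠ ⊤) (g₁ g₂ : G) :
    ((Subgroup.map (MulAut.conj g₁).toMonoidHom H : Set G) *
      (Subgroup.map (MulAut.conj g₂).toMonoidHom H : Set G)) ≠ Set.univ := by
  intro h
  set K := Subgroup.map (MulAut.conj g₁).toMonoidHom H with hK
  have hmap : Subgroup.map (MulAut.conj g₂).toMonoidHom H
      = Subgroup.map (MulAut.conj (g₂ * g₁⁻¹)).toMonoidHom K := by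
    rw [hK, ← aux_map_conj_mul]
    congr 2
    group
  rw [hmap] at h
  have hKtop : K = ⊤ := aux_key K (g₂ * g₁⁻¹) h
  apply hH
  rw [eq_top_iff]
  intro x _
  have hx : (MulAut.conj g₁) x ∈ K := hKtop ▸ Subgroup.mem_top _
  obtain ⟨y, hy, he⟩ := hx
  have : y = x := (MulAut.conj g₁).injective he
  rwa [← this]
end

section
/- Let G be a finite solvable group and M, N maximal subgroups of G. Then either the set product MN equals G, or M and N are conjugate in G. -/
open Pointwise
open scoped commutatorElement

universe u

section OreAuxiliary


section OreAux
variable {G : Type*} [Group G]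

lemma ore_exists_min_normal [Finite G] (R : Subgroup G) (hR : R.Normal) (hRbot : R ≠ ⊥) :
    ∃ K : Subgroup G, K.Normal ∧ K ≠ ⊥ ∧ K ≤ R ∧
      ∀ S : Subgroup G, S.Normal → S ≠ ⊥ → S ≤ K → S = K := by
  classical
  have hfin : (Set.univ : Set (Subgroup G)).Finite := Set.finite_univ
  have hset : {H : Subgroup G | H.Normal ∧ H ≠ ⊥ ∧ H ≤ R}.Finite := Set.Finite.subset hfin (by simp)
  have hne : {H : Subgroup G | H.Normal ∧ H ≠ ⊥ ∧ H ≤ R}.Nonempty := ⟨R, hR, hRbot, le_rfl⟩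
  obtain ⟨K, hKmem, hKmin⟩ := hset.exists_minimal hne
  refine ⟨K, hKmem.1, hKmem.2.1, hKmem.2.2, fun S hS hSbot hSK => ?_⟩
  exact le_antisymm hSK (hKmin ⟨hS, hSbot, hSK.trans hKmem.2.2⟩ hSK)

end OreAux


section OreAux
variable {G : Type*} [Group G]

lemma ore_min_normal_comm [Group.IsSolvable G] (K : Subgroup G) (hK : K.Normal) (hKbot : K ≠ ⊥)
    (hmin : ∀ S : Subgroup G, S.Normal → S ≠ ⊥ → S ≤ K → S = K) :
    ∀ x ∈ K, ∀ y ∈ K, x * y = y * x := by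
  haveI := hK
  have hle : ⁅K, K⁆ ≤ K := (Subgroup.commutator_le_inf K K).trans inf_le_left
  by_cases hbot : ⁅K, K⁆ = ⊥
  · intro x hx y hy
    have h1 : ⁅x, y⁆ ∈ (⊥ : Subgroup G) := hbot ▸ Subgroup.commutator_mem_commutator hx hy
    exact (commutatorElement_eq_one_iff_mul_comm.mp (Subgroup.mem_bot.mp h1))
  · exfalso
    have heq : ⁅K, K⁆ = K := hmin _ (Subgroup.commutator_normal K K) hbot hle
    have hstep : ∀ n : ℕ, K ≤ derivedSeries G n := by
      intro n
      induction n with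
      | zero => exact le_top
      | succ m ihm =>
        rw [derivedSeries_succ]
        calc K = ⁅K, K⁆ := heq.symm
        _ ≤ ⁅derivedSeries G m, derivedSeries G m⁆ := Subgroup.commutator_mono ihm ihm
    obtain ⟨n, hn⟩ := Group.IsSolvable.solvable (G := G)
    exact hKbot (le_bot_iff.mp (hn ▸ hstep n))

end OreAux


section OreAux
variable {G : Type*} [Group G]

lemma ore_min_normal_pgroup [Finite G] (K : Subgroup G) (hK : K.Normal) (hKbot : K ≠ ⊥)
    (hcomm : ∀ x ∈ K, ∀ y ∈ K, x * y = y * x)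
    (hmin : ∀ S : Subgroup G, S.Normal → S ≠ ⊥ → S ≤ K → S = K)
    {p : ℕ} (hp : p.Prime) (hdvd : p ∣ Nat.card K) :
    IsPGroup p K ∧ ∀ x ∈ K, x ^ p = 1 := by
  haveI : Fact p.Prime := ⟨hp⟩
  let S : Subgroup G :=
    { carrier := {x | x ∈ K ∧ x ^ p = 1}
      one_mem' := ⟨one_mem K, one_pow p⟩
      mul_mem' := by
        rintro a b ⟨haK, hap⟩ ⟨hbK, hbp⟩
        refine ⟨mul_mem haK hbK, ?_⟩
        have hc : Commute a b := hcomm a haK b hbK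
        rw [hc.mul_pow, hap, hbp, one_mul]
      inv_mem' := by
        rintro a ⟨haK, hap⟩
        exact ⟨inv_mem haK, by rw [inv_pow, hap, inv_one]⟩ }
  have hSnormal : S.Normal := by
    constructor
    rintro x ⟨hxK, hxp⟩ g
    refine ⟨hK.conj_mem x hxK g, ?_⟩
    rw [conj_pow, hxp, mul_one, mul_inv_cancel]
  have hSbot : S ≠ ⊥ := by
    obtain ⟨x, hx⟩ := exists_prime_orderOf_dvd_card' (G := K) p hdvd
    intro hcon
    have hxS : (x : G) ∈ S := by
      refine ⟨x.2, ?_⟩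
      have : x ^ p = 1 := by rw [← hx, pow_orderOf_eq_one]
      exact_mod_cast congrArg (Subtype.val) this
    rw [hcon, Subgroup.mem_bot] at hxS
    have : x = 1 := Subtype.ext hxS
    rw [this, orderOf_one] at hx
    exact hp.one_lt.ne hx
  have hSK : S ≤ K := fun x hx => hx.1
  have hSeq : S = K := hmin S hSnormal hSbot hSK
  have hpow : ∀ x ∈ K, x ^ p = 1 := by
    intro x hx
    have : x ∈ S := hSeq.symm ▸ hx
    exact this.2
  refine ⟨fun x => ⟨1, ?_⟩, hpow⟩
  have := hpow (x : G) x.2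
  rw [pow_one]
  exact Subtype.ext (by simpa using this)

lemma ore_isCoatom_map {H : Type*} [Group H] (f : G →* H) (hf : Function.Surjective f)
    (M : Subgroup G) (hker : f.ker ≤ M) (hM : IsCoatom M) : IsCoatom (M.map f) := by
  constructor
  · intro h
    apply hM.1
    have h2 := congrArg (Subgroup.comap f) h
    rwa [Subgroup.comap_map_eq, sup_of_le_left hker,
      (Subgroup.comap_top f : Subgroup.comap f ⊤ = ⊤)] at h2
  · intro K hK
    have h1 : M < K.comap f := by
      have hle : M.map f ≤ K := le_of_lt hK
      have : M ≤ K.comap f := by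
        rw [← sup_of_le_left hker, ← Subgroup.comap_map_eq]
        exact Subgroup.comap_mono hle
      refine lt_of_le_of_ne this ?_
      intro hcon
      have : M.map f = K := by
        rw [hcon, Subgroup.map_comap_eq_self_of_surjective hf _]
      exact hK.ne this
    have h2 := hM.2 _ h1
    have := congrArg (Subgroup.map f) h2
    rwa [Subgroup.map_comap_eq_self_of_surjective hf _, Subgroup.map_top_of_surjective f hf] at this

lemma ore_centralizer_normal (K : Subgroup G) (hK : K.Normal) :
    (Subgroup.centralizer (K : Set G)).Normal := by
  constructor
  intro c hc g
  rw [Subgroup.mem_centralizer_iff] at hc ⊢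
  intro k hk
  have hk' : g⁻¹ * k * g ∈ K := by
    have := hK.conj_mem k hk g⁻¹
    simpa using this
  have hcomm := hc _ hk'
  calc k * (g * c * g⁻¹) = g * (g⁻¹ * k * g * c) * g⁻¹ := by group
  _ = g * (c * (g⁻¹ * k * g)) * g⁻¹ := by rw [hcomm]
  _ = g * c * g⁻¹ * k := by group

end OreAux

end OreAuxiliary

theorem ore_primitive {G : Type u} [Group G] [Finite G] [Group.IsSolvable G]
    (M N : Subgroup G) (hM : IsCoatom M) (hN : IsCoatom N)
    (hMcore : M.normalCore = ⊥) (hNcore : N.normalCore = ⊥) :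
    ∃ g : G, N = Subgroup.map (MulAut.conj g).toMonoidHom M := by
  classical
  have hGnt : Nontrivial G := by
    by_contra h
    rw [not_nontrivial_iff_subsingleton] at h
    exact hM.1 (Subsingleton.elim _ _)
  obtain ⟨K, hKn, hKbot, -, hKmin⟩ :=
    ore_exists_min_normal (⊤ : Subgroup G) inferInstance (by simp)
  have hcomm := ore_min_normal_comm K hKn hKbot hKmin
  -- K is not contained in M or N
  have hKM : ¬ K ≤ M := by
    intro h
    haveI := hKn
    exact hKbot (le_bot_iff.mp (hMcore ▸ Subgroup.normal_le_normalCore.mpr h))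
  have hKN : ¬ K ≤ N := by
    intro h
    haveI := hKn
    exact hKbot (le_bot_iff.mp (hNcore ▸ Subgroup.normal_le_normalCore.mpr h))
  have supM : M ⊔ K = ⊤ := hM.2 _ (left_lt_sup.mpr hKM)
  have supN : N ⊔ K = ⊤ := hN.2 _ (left_lt_sup.mpr hKN)
  -- trivial intersections with K
  have hinfnormal : ∀ (A : Subgroup G), A ⊔ K = ⊤ → (A ⊓ K).Normal := by
    intro A hsup
    rw [← Subgroup.normalizer_eq_top_iff, ← top_le_iff, ← hsup]
    apply sup_le
    · intro a ha
      rw [Subgroup.mem_normalizer_iff]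
      intro h
      constructor
      · intro hmem
        obtain ⟨h1, h2⟩ := Subgroup.mem_inf.mp hmem
        exact Subgroup.mem_inf.mpr ⟨mul_mem (mul_mem ha h1) (inv_mem ha), hKn.conj_mem h h2 a⟩
      · intro hmem
        obtain ⟨h1, h2⟩ := Subgroup.mem_inf.mp hmem
        have e1 : h = a⁻¹ * (a * h * a⁻¹) * a⁻¹⁻¹ := by group
        refine Subgroup.mem_inf.mpr ⟨?_, ?_⟩
        · rw [e1]; exact mul_mem (mul_mem (inv_mem ha) h1) (inv_mem (inv_mem ha))
        · rw [e1]; exact hKn.conj_mem _ h2 a⁻¹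
    · intro k hk
      rw [Subgroup.mem_normalizer_iff]
      intro h
      have key : ∀ kk ∈ K, ∀ x ∈ A ⊓ K, kk * x * kk⁻¹ = x := by
        intro kk hkk x hx
        rw [hcomm kk hkk x (Subgroup.mem_inf.mp hx).2]
        group
      constructor
      · intro hmem
        rw [key k hk h hmem]; exact hmem
      · intro hmem
        have h2 : k⁻¹ * (k * h * k⁻¹) * k⁻¹⁻¹ = k * h * k⁻¹ := key k⁻¹ (inv_mem hk) _ hmem
        have e : h = k * h * k⁻¹ := by rw [← h2]; group
        rw [e]; exact hmem
  
  have hMK : M ⊓ K = ⊥ := by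
    haveI := hinfnormal M supM
    exact le_bot_iff.mp (hMcore ▸ Subgroup.normal_le_normalCore.mpr inf_le_left)
  have hNK : N ⊓ K = ⊥ := by
    haveI := hinfnormal N supN
    exact le_bot_iff.mp (hNcore ▸ Subgroup.normal_le_normalCore.mpr inf_le_left)
  by_cases hKtop : K = ⊤
  · have hMbot : M = ⊥ := by rw [← hMK, hKtop, inf_top_eq]
    have hNbot : N = ⊥ := by rw [← hNK, hKtop, inf_top_eq]
    refine ⟨1, ?_⟩
    have hid : (MulAut.conj (1 : G)).toMonoidHom = MonoidHom.id G := by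
      ext x; simp
    rw [hid, Subgroup.map_id, hMbot, hNbot]
  -- the centralizer of K is K itself
  have hCgnormal : (Subgroup.centralizer (K : Set G)).Normal := ore_centralizer_normal K hKn
  have hKCg : K ≤ Subgroup.centralizer (K : Set G) := by
    intro x hx
    exact Subgroup.mem_centralizer_iff.mpr (fun y hy => hcomm y hy x hx)
  have hCgK : Subgroup.centralizer (K : Set G) = K := by
    have hCgMn : (Subgroup.centralizer (K : Set G) ⊓ M).Normal := by
      rw [← Subgroup.normalizer_eq_top_iff, ← top_le_iff, ← supM]
      apply sup_le
      · intro a ha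
        rw [Subgroup.mem_normalizer_iff]
        intro h
        constructor
        · intro hmem
          obtain ⟨h1, h2⟩ := Subgroup.mem_inf.mp hmem
          exact Subgroup.mem_inf.mpr
            ⟨hCgnormal.conj_mem h h1 a, mul_mem (mul_mem ha h2) (inv_mem ha)⟩
        · intro hmem
          obtain ⟨h1, h2⟩ := Subgroup.mem_inf.mp hmem
          have e1 : h = a⁻¹ * (a * h * a⁻¹) * a⁻¹⁻¹ := by group
          refine Subgroup.mem_inf.mpr ⟨?_, ?_⟩
          · rw [e1]; exact hCgnormal.conj_mem _ h1 a⁻¹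
          · rw [e1]; exact mul_mem (mul_mem (inv_mem ha) h2) (inv_mem (inv_mem ha))
      · intro k hk
        rw [Subgroup.mem_normalizer_iff]
        intro h
        have key : ∀ kk ∈ K, ∀ x ∈ Subgroup.centralizer (K : Set G) ⊓ M,
            kk * x * kk⁻¹ = x := by
          intro kk hkk x hx
          have h3 := (Subgroup.mem_centralizer_iff.mp (Subgroup.mem_inf.mp hx).1) kk hkk
          rw [h3]; group
        constructor
        · intro hmem; rw [key k hk h hmem]; exact hmem
        · intro hmem
          have h2 : k⁻¹ * (k * h * k⁻¹) * k⁻¹⁻¹ = k * h * k⁻¹ := key k⁻¹ (inv_mem hk) _ hmem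
          have e : h = k * h * k⁻¹ := by rw [← h2]; group
          rw [e]; exact hmem
    have hCgMbot : Subgroup.centralizer (K : Set G) ⊓ M = ⊥ := by
      haveI := hCgMn
      exact le_bot_iff.mp (hMcore ▸ Subgroup.normal_le_normalCore.mpr inf_le_right)
    refine le_antisymm ?_ hKCg
    intro x hx
    have hsupKM : K ⊔ M = ⊤ := by rw [sup_comm]; exact supM
    have hxtop : x ∈ (K : Set G) * (M : Set G) := by
      rw [← Subgroup.normal_mul, hsupKM, Subgroup.coe_top]
      trivial
    obtain ⟨k, hkmem, m, hmmem, rfl⟩ := hxtop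
    have hmC : m ∈ Subgroup.centralizer (K : Set G) := by
      have h4 : k⁻¹ * (k * m) ∈ Subgroup.centralizer (K : Set G) :=
        mul_mem (inv_mem (hKCg hkmem)) hx
      simpa using h4
    have h5 : m ∈ Subgroup.centralizer (K : Set G) ⊓ M := Subgroup.mem_inf.mpr ⟨hmC, hmmem⟩
    rw [hCgMbot, Subgroup.mem_bot] at h5
    rw [h5]
    simpa using hkmem
  -- K is the unique minimal normal subgroup
  have hKuniq : ∀ R : Subgroup G, R.Normal → R ≠ ⊥ → K ≤ R := by
    intro R hR hRbot
    obtain ⟨R0, hR0n, hR0bot, hR0R, hR0min⟩ := ore_exists_min_normal R hR hRbot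
    by_cases h : R0 ⊓ K = ⊥
    · have hcle : ⁅R0, K⁆ ≤ ⊥ := by
        rw [← h]
        haveI := hR0n; haveI := hKn
        exact Subgroup.commutator_le_inf R0 K
      have hR0C : R0 ≤ Subgroup.centralizer (K : Set G) := by
        intro x hx
        rw [Subgroup.mem_centralizer_iff]
        intro k hk
        have h6 : ⁅x, k⁆ ∈ (⊥ : Subgroup G) := hcle (Subgroup.commutator_mem_commutator hx hk)
        exact (commutatorElement_eq_one_iff_mul_comm.mp (Subgroup.mem_bot.mp h6)).symm
      have hR0K : R0 ≤ K := hCgK ▸ hR0C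
      have : R0 = K := hKmin R0 hR0n hR0bot hR0K
      exact this ▸ hR0R
    · haveI := hR0n; haveI := hKn
      have h7 : R0 ⊓ K = K := hKmin _ (Subgroup.normal_inf_normal R0 K) h inf_le_right
      exact le_trans (h7 ▸ inf_le_left) hR0R
  
  -- the prime p for K
  have hKcard : 1 < Nat.card K := (Subgroup.one_lt_card_iff_ne_bot K).mpr hKbot
  set p : ℕ := (Nat.card K).minFac with hpdef
  have hp : p.Prime := Nat.minFac_prime (by omega)
  have hpdvd : p ∣ Nat.card K := Nat.minFac_dvd _
  obtain ⟨hKpg, hKpow⟩ := ore_min_normal_pgroup K hKn hKbot hcomm hKmin hp hpdvd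
  -- quotient by K
  set π : G →* G ⧸ K := QuotientGroup.mk' K with hπdef
  haveI := hKn
  have hπsurj : Function.Surjective π := QuotientGroup.mk'_surjective K
  have hker : π.ker = K := QuotientGroup.ker_mk' K
  have hQnt : Nontrivial (G ⧸ K) := by
    obtain ⟨x, hx⟩ : ∃ x, x ∉ K := by
      by_contra hcon
      push_neg at hcon
      exact hKtop (Subgroup.eq_top_iff' K |>.mpr hcon)
    refine ⟨π x, 1, fun hcon => hx ?_⟩
    exact (QuotientGroup.eq_one_iff x).mp hcon
  obtain ⟨Lbar, hLn, hLbot, -, hLmin⟩ :=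
    ore_exists_min_normal (⊤ : Subgroup (G ⧸ K)) inferInstance (by simp)
  have hLcomm := ore_min_normal_comm Lbar hLn hLbot hLmin
  have hLcard : 1 < Nat.card Lbar := (Subgroup.one_lt_card_iff_ne_bot Lbar).mpr hLbot
  set q : ℕ := (Nat.card Lbar).minFac with hqdef
  have hq : q.Prime := Nat.minFac_prime (by omega)
  have hqdvd : q ∣ Nat.card Lbar := Nat.minFac_dvd _
  obtain ⟨hLpg, hLpow⟩ := ore_min_normal_pgroup Lbar hLn hLbot hLcomm hLmin hq hqdvd
  -- pull back L
  set L : Subgroup G := Subgroup.comap π Lbar with hLdef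
  have hLnormal : L.Normal := hLn.comap π
  have hKL : K ≤ L := by
    rw [← hker]
    exact Subgroup.comap_mono bot_le
  have hmapL : L.map π = Lbar := Subgroup.map_comap_eq_self_of_surjective hπsurj _
  have hLneK : L ≠ K := by
    intro h
    apply hLbot
    rw [← hmapL, h]
    exact (Subgroup.map_eq_bot_iff K).mpr (le_of_eq hker.symm)
  -- q ≠ p
  have hqp : q ≠ p := by
    intro hqp
    -- L is a p-group
    have hLpgroup : IsPGroup p ↥L := by
      intro x
      obtain ⟨k, hk⟩ := hLpg ⟨π x, by rw [← hmapL]; exact ⟨(x : G), x.2, rfl⟩⟩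
      have hk2 : (π (x : G)) ^ q ^ k = 1 := by
        have := congrArg (Subtype.val) hk
        simpa using this
      have hk3 : (x : G) ^ q ^ k ∈ K := by
        rw [← hker, MonoidHom.mem_ker, map_pow]
        exact hk2
      refine ⟨k + 1, ?_⟩
      have hk4 : ((x : G) ^ q ^ k) ^ p = 1 := hKpow _ hk3
      rw [hqp] at hk4
      apply Subtype.ext
      push_cast
      rw [pow_succ, pow_mul]
      exact hk4
    -- the center of L gives a contradiction
    haveI : Fact p.Prime := ⟨hp⟩
    have hLbotG : L ≠ ⊥ := fun h => hKbot (le_bot_iff.mp (h ▸ hKL))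
    haveI : Nontrivial ↥L := (Subgroup.nontrivial_iff_ne_bot L).mpr hLbotG
    haveI hcnt := IsPGroup.center_nontrivial hLpgroup
    obtain ⟨z, hz⟩ := exists_ne (1 : ↥(Subgroup.center ↥L))
    set ZL : Subgroup G := Subgroup.centralizer (L : Set G) ⊓ L with hZLdef
    have hZLn : ZL.Normal := by
      haveI h1 := ore_centralizer_normal L hLnormal
      haveI h2 := hLnormal
      exact Subgroup.normal_inf_normal _ _
    have hZLbot : ZL ≠ ⊥ := by
      intro hcon
      apply hz
      have hmem : ((z : ↥L) : G) ∈ ZL := by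
        refine Subgroup.mem_inf.mpr ⟨?_, (z : ↥L).2⟩
        rw [Subgroup.mem_centralizer_iff]
        intro y hy
        have := (Subgroup.mem_center_iff.mp z.2) ⟨y, hy⟩
        exact congrArg Subtype.val this
      rw [hcon, Subgroup.mem_bot] at hmem
      apply Subtype.ext
      exact Subtype.ext hmem
    have hKZL : K ≤ ZL := hKuniq ZL hZLn hZLbot
    have hLCg : L ≤ Subgroup.centralizer (K : Set G) := by
      intro l hl
      rw [Subgroup.mem_centralizer_iff]
      intro k hk
      have h8 := Subgroup.mem_centralizer_iff.mp (Subgroup.mem_inf.mp (hKZL hk)).1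
      exact (h8 l hl).symm
    rw [hCgK] at hLCg
    exact hLneK (le_antisymm hLCg hKL)
  
  have hmapTop : ∀ A : Subgroup G, A ⊔ K = ⊤ → A.map π = ⊤ := by
    intro A hsup
    have h0 := congrArg (Subgroup.map π) hsup
    rwa [Subgroup.map_sup, (Subgroup.map_eq_bot_iff K).mpr (le_of_eq hker.symm), sup_bot_eq,
      Subgroup.map_top_of_surjective π hπsurj] at h0
  have hQfacts : ∀ A : Subgroup G, A ⊔ K = ⊤ → A ⊓ K = ⊥ →
      (L ⊓ A).map π = Lbar ∧ Nat.card ↥(L ⊓ A) = Nat.card ↥Lbar ∧ IsPGroup q ↥(L ⊓ A) := by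
    intro A hsup hinf
    have hQAmap : (L ⊓ A).map π = Lbar := by
      apply le_antisymm
      · rw [← hmapL]; exact Subgroup.map_mono inf_le_left
      · intro xb hxb
        have h0 : xb ∈ A.map π := by rw [hmapTop A hsup]; trivial
        obtain ⟨m, hm, rfl⟩ := h0
        exact ⟨m, Subgroup.mem_inf.mpr ⟨Subgroup.mem_comap.mpr hxb, hm⟩, rfl⟩
    have htriv : ∀ x : G, x ∈ L ⊓ A → x ∈ K → x = 1 := by
      intro x hx hxK
      have h0 : x ∈ A ⊓ K := Subgroup.mem_inf.mpr ⟨(Subgroup.mem_inf.mp hx).2, hxK⟩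
      rw [hinf, Subgroup.mem_bot] at h0; exact h0
    have hcard : Nat.card ↥(L ⊓ A) = Nat.card ↥Lbar := by
      apply Nat.card_eq_of_bijective
        (fun x : ↥(L ⊓ A) => (⟨π (x : G), by rw [← hQAmap]; exact ⟨(x : G), x.2, rfl⟩⟩ : ↥Lbar))
      constructor
      · intro a b hab
        have h1 : π ((a : G) * (b : G)⁻¹) = 1 := by
          have h0 := congrArg Subtype.val hab
          simp only at h0
          rw [map_mul, map_inv, h0, mul_inv_cancel]
        have h2 : (a : G) * (b : G)⁻¹ ∈ K := by
          rw [← hker, MonoidHom.mem_ker]; exact h1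
        have h3 : (a : G) * (b : G)⁻¹ = 1 := htriv _ (mul_mem a.2 (inv_mem b.2)) h2
        exact Subtype.ext (mul_inv_eq_one.mp h3)
      · rintro ⟨xb, hxb⟩
        rw [← hQAmap] at hxb
        obtain ⟨m, hm, hm2⟩ := hxb
        exact ⟨⟨m, hm⟩, Subtype.ext hm2⟩
    have hpg : IsPGroup q ↥(L ⊓ A) := by
      intro x
      have hmem : π (x : G) ∈ Lbar := Subgroup.mem_comap.mp (Subgroup.mem_inf.mp x.2).1
      obtain ⟨k, hk⟩ := hLpg ⟨π (x : G), hmem⟩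
      have hk2 : (π (x : G)) ^ q ^ k = 1 := by
        have h0 := congrArg Subtype.val hk; simpa using h0
      have hk3 : (x : G) ^ q ^ k ∈ K := by
        rw [← hker, MonoidHom.mem_ker, map_pow]; exact hk2
      have hk4 : (x : G) ^ q ^ k = 1 := htriv _ (pow_mem x.2 _) hk3
      exact ⟨k, Subtype.ext (by push_cast; exact hk4)⟩
    exact ⟨hQAmap, hcard, hpg⟩
  have hcardL : Nat.card ↥L = Nat.card ↥Lbar * Nat.card ↥K := by
    have hkerf : (π.comp L.subtype).ker = K.subgroupOf L := by
      ext x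
      simp only [MonoidHom.mem_ker, MonoidHom.comp_apply, Subgroup.mem_subgroupOf, ← hker]
      rfl
    have hrangef : (π.comp L.subtype).range = Lbar := by
      rw [MonoidHom.range_comp, Subgroup.range_subtype, hmapL]
    have h1 : Nat.card ↥L
        = Nat.card (↥L ⧸ (π.comp L.subtype).ker) * Nat.card ↥((π.comp L.subtype).ker) :=
      Subgroup.card_eq_card_quotient_mul_card_subgroup _
    have h2 : Nat.card (↥L ⧸ (π.comp L.subtype).ker) = Nat.card ↥Lbar := by
      rw [← hrangef]
      exact Nat.card_congr (QuotientGroup.quotientKerEquivRange _).toEquiv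
    have h3 : Nat.card ↥((π.comp L.subtype).ker) = Nat.card ↥K := by
      rw [hkerf]
      exact Nat.card_congr (Subgroup.subgroupOfEquivOfLe hKL).toEquiv
    rw [h1, h2, h3]
  
  haveI : Fact q.Prime := ⟨hq⟩
  haveI : Fact p.Prime := ⟨hp⟩
  obtain ⟨bq, hbq⟩ := hLpg.exists_card_eq
  obtain ⟨ap, hap⟩ := hKpg.exists_card_eq
  obtain ⟨hQMmap, hQMcard, hQMpg⟩ := hQfacts M supM hMK
  obtain ⟨hQNmap, hQNcard, hQNpg⟩ := hQfacts N supN hNK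
  -- Sylow subgroups of L
  have key : ∀ A : Subgroup G, Nat.card ↥(L ⊓ A) = Nat.card ↥Lbar →
      ∀ S : Sylow q ↥L, ((L ⊓ A).subgroupOf L) ≤ S.toSubgroup →
      ((L ⊓ A).subgroupOf L) = S.toSubgroup := by
    intro A hcard S hle
    have hcard' : Nat.card ↥((L ⊓ A).subgroupOf L) = q ^ bq := by
      rw [← hbq, ← hcard]
      exact Nat.card_congr (Subgroup.subgroupOfEquivOfLe inf_le_left).toEquiv
    obtain ⟨n, hn⟩ := S.isPGroup'.exists_card_eq
    have hdvd1 : Nat.card ↥(S.toSubgroup) ∣ Nat.card ↥L := Subgroup.card_subgroup_dvd_card _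
    rw [hcardL, hbq, hap, hn] at hdvd1
    have hcop : (Nat.Coprime (q ^ n) (p ^ ap)) :=
      Nat.Coprime.pow _ _ ((Nat.coprime_primes hq hp).mpr hqp)
    have hdvd2 : q ^ n ∣ q ^ bq := hcop.dvd_of_dvd_mul_right hdvd1
    have hle2 : Nat.card ↥(S.toSubgroup) ≤ Nat.card ↥((L ⊓ A).subgroupOf L) := by
      rw [hn, hcard']
      exact Nat.le_of_dvd (Nat.pow_pos (n := bq) hq.pos) hdvd2
    exact Subgroup.eq_of_le_of_card_ge hle hle2
  have hQM'pg : IsPGroup q ↥((L ⊓ M).subgroupOf L) :=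
    hQMpg.of_equiv (Subgroup.subgroupOfEquivOfLe inf_le_left).symm
  have hQN'pg : IsPGroup q ↥((L ⊓ N).subgroupOf L) :=
    hQNpg.of_equiv (Subgroup.subgroupOfEquivOfLe inf_le_left).symm
  obtain ⟨SM, hSM⟩ := hQM'pg.exists_le_sylow
  obtain ⟨SN, hSN⟩ := hQN'pg.exists_le_sylow
  have hSMeq := key M hQMcard SM hSM
  have hSNeq := key N hQNcard SN hSN
  haveI : Finite (Sylow q ↥L) :=
    Finite.of_injective (fun S : Sylow q ↥L => S.toSubgroup)
      (fun S T h => Sylow.ext h)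
  obtain ⟨x, hx⟩ := MulAction.exists_smul_eq (↥L) SM SN
  have hconj : (L ⊓ N).subgroupOf L
      = Subgroup.map (MulAut.conj x).toMonoidHom ((L ⊓ M).subgroupOf L) := by
    rw [hSMeq, hSNeq, ← hx]
    rfl
  -- push the conjugacy up to G
  set g₀ : G := (x : G) with hg₀def
  have hconj2 : L ⊓ N = Subgroup.map (MulAut.conj g₀).toMonoidHom (L ⊓ M) := by
    have h1 := congrArg (Subgroup.map L.subtype) hconj
    rw [Subgroup.subgroupOf_map_subtype, Subgroup.map_map] at h1
    have hcomp : L.subtype.comp (MulAut.conj x).toMonoidHom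
        = (MulAut.conj g₀).toMonoidHom.comp L.subtype := by
      ext y
      simp [MulAut.conj, hg₀def]
    rw [hcomp, ← Subgroup.map_map, Subgroup.subgroupOf_map_subtype] at h1
    have e1 : L ⊓ N ⊓ L = L ⊓ N := by
      rw [inf_comm (L ⊓ N) L, ← inf_assoc, inf_idem]
    have e2 : L ⊓ M ⊓ L = L ⊓ M := by
      rw [inf_comm (L ⊓ M) L, ← inf_assoc, inf_idem]
    rw [e1, e2] at h1
    exact h1
  
  -- each of M, N is the normalizer of its q-part of L
  have hnorm : ∀ A : Subgroup G, IsCoatom A → Nat.card ↥(L ⊓ A) = Nat.card ↥Lbar →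
      IsPGroup q ↥(L ⊓ A) → A = Subgroup.normalizer ((L ⊓ A : Subgroup G) : Set G) := by
    intro A hA hcard hpg
    have hle : A ≤ Subgroup.normalizer ((L ⊓ A : Subgroup G) : Set G) := by
      intro a ha
      rw [Subgroup.mem_normalizer_iff]
      intro h
      constructor
      · intro hmem
        obtain ⟨h1, h2⟩ := Subgroup.mem_inf.mp hmem
        exact Subgroup.mem_inf.mpr
          ⟨hLnormal.conj_mem h h1 a, mul_mem (mul_mem ha h2) (inv_mem ha)⟩
      · intro hmem
        obtain ⟨h1, h2⟩ := Subgroup.mem_inf.mp hmem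
        have e1 : h = a⁻¹ * (a * h * a⁻¹) * a⁻¹⁻¹ := by group
        refine Subgroup.mem_inf.mpr ⟨?_, ?_⟩
        · rw [e1]; exact hLnormal.conj_mem _ h1 a⁻¹
        · rw [e1]; exact mul_mem (mul_mem (inv_mem ha) h2) (inv_mem (inv_mem ha))
    have hne : Subgroup.normalizer ((L ⊓ A : Subgroup G) : Set G) ≠ ⊤ := by
      intro hcon
      have hQn : (L ⊓ A).Normal := Subgroup.normalizer_eq_top_iff.mp hcon
      have hQbot : L ⊓ A ≠ ⊥ := by
        intro hcon2
        rw [hcon2] at hcard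
        have : Nat.card (↥(⊥ : Subgroup G)) = 1 := Nat.card_eq_one_iff_unique.mpr
          ⟨⟨fun a b => Subtype.ext (by
            have := a.2; have := b.2
            simp only [Subgroup.mem_bot] at *
            rw [‹(a : G) = 1›, ‹(b : G) = 1›])⟩, ⟨1⟩⟩
        omega
      have hKQ : K ≤ L ⊓ A := hKuniq _ hQn hQbot
      obtain ⟨y, hy⟩ := exists_prime_orderOf_dvd_card' (G := ↥K) p hpdvd
      have hyQ : (y : G) ∈ L ⊓ A := hKQ y.2
      obtain ⟨k, hk⟩ := hpg ⟨(y : G), hyQ⟩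
      have hk2 : (y : G) ^ q ^ k = 1 := by
        have h0 := congrArg Subtype.val hk
        simpa using h0
      have hordy : orderOf (y : G) = p := by
        rw [Subgroup.orderOf_coe, hy]
      have hdvd : p ∣ q ^ k := by
        rw [← hordy]
        exact orderOf_dvd_of_pow_eq_one hk2
      have : p = q := by
        rcases (Nat.Prime.eq_one_or_self_of_dvd hq _ (hp.dvd_of_dvd_pow hdvd)) with h | h
        · exact absurd h hp.ne_one
        · exact h
      exact hqp this.symm
    rcases eq_or_lt_of_le hle with h | h
    · exact h
    · exact absurd (hA.2 _ h) hne
  have hMnorm := hnorm M hM hQMcard hQMpg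
  have hNnorm := hnorm N hN hQNcard hQNpg
  refine ⟨g₀, ?_⟩
  rw [hMnorm, hNnorm, hconj2, Subgroup.map_equiv_normalizer_eq]

theorem ore_aux : ∀ (n : ℕ) (G : Type u) [Group G] [Finite G] [Group.IsSolvable G]
    (M N : Subgroup G), Nat.card G ≤ n → IsCoatom M → IsCoatom N →
    (M : Set G) * (N : Set G) = Set.univ ∨
      ∃ g : G, N = Subgroup.map (MulAut.conj g).toMonoidHom M := by
  intro n
  induction n with
  | zero =>
    intro G _ _ _ M N hcard hM hN
    exact absurd (Nat.le_zero.mp hcard) (Nat.card_pos (α := G)).ne'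
  | succ n ih =>
    intro G _ _ _ M N hcard hM hN
    by_cases h1 : M.normalCore ≤ N
    case neg =>
      left
      have hsup : M.normalCore ⊔ N = ⊤ := hN.2 _ (by rwa [right_lt_sup])
      have hset : (M.normalCore : Set G) * (N : Set G) = Set.univ := by
        rw [← Subgroup.normal_mul, hsup, Subgroup.coe_top]
      apply Set.eq_univ_of_univ_subset
      rw [← hset]
      exact Set.mul_subset_mul_right (SetLike.coe_subset_coe.mpr M.normalCore_le)
    by_cases h2 : N.normalCore ≤ M
    case neg =>
      left
      have hsup : M ⊔ N.normalCore = ⊤ := hM.2 _ (by rwa [left_lt_sup])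
      have hset : (M : Set G) * (N.normalCore : Set G) = Set.univ := by
        rw [← Subgroup.mul_normal, hsup, Subgroup.coe_top]
      apply Set.eq_univ_of_univ_subset
      rw [← hset]
      exact Set.mul_subset_mul_left (SetLike.coe_subset_coe.mpr N.normalCore_le)
    -- now both cores are contained in both M and N
    set C : Subgroup G := M.normalCore ⊔ N.normalCore with hCdef
    have hCM : C ≤ M := sup_le M.normalCore_le h2
    have hCN : C ≤ N := sup_le h1 N.normalCore_le
    by_cases hC : C = ⊥
    · right
      have hMc : M.normalCore = ⊥ := le_bot_iff.mp (hC ▸ le_sup_left (b := N.normalCore))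
      have hNc : N.normalCore = ⊥ := le_bot_iff.mp (hC ▸ le_sup_right (a := M.normalCore))
      exact ore_primitive M N hM hN hMc hNc
    · -- quotient by C and induct
      haveI : C.Normal := Subgroup.sup_normal _ _
      set π : G →* G ⧸ C := QuotientGroup.mk' C with hπdef
      have hπsurj : Function.Surjective π := QuotientGroup.mk'_surjective C
      have hker : π.ker = C := QuotientGroup.ker_mk' C
      have hcard2 : Nat.card (G ⧸ C) ≤ n := by
        have hlt : Nat.card (G ⧸ C) < Nat.card G := by
          have heq : Nat.card G = Nat.card (G ⧸ C) * Nat.card C :=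
            Subgroup.card_eq_card_quotient_mul_card_subgroup C
          have h2C : 1 < Nat.card C := (Subgroup.one_lt_card_iff_ne_bot C).mpr hC
          have hpos : 0 < Nat.card (G ⧸ C) := Nat.card_pos
          calc Nat.card (G ⧸ C) = Nat.card (G ⧸ C) * 1 := (mul_one _).symm
          _ < Nat.card (G ⧸ C) * Nat.card C := by exact (Nat.mul_lt_mul_left hpos).mpr h2C
          _ = Nat.card G := heq.symm
        omega
      have hMco : IsCoatom (M.map π) := ore_isCoatom_map π hπsurj M (by rw [hker]; exact hCM) hM
      have hNco : IsCoatom (N.map π) := ore_isCoatom_map π hπsurj N (by rw [hker]; exact hCN) hN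
      rcases ih (G ⧸ C) (M.map π) (N.map π) hcard2 hMco hNco with hres | ⟨gbar, hres⟩
      · left
        apply Set.eq_univ_of_forall
        intro g
        have : (π g : G ⧸ C) ∈ (M.map π : Set (G ⧸ C)) * (N.map π : Set (G ⧸ C)) := by
          rw [hres]; trivial
        obtain ⟨a, ha, b, hb, hab⟩ := this
        obtain ⟨m, hm, rfl⟩ := ha
        obtain ⟨nn, hn, rfl⟩ := hb
        have : π ((m * nn)⁻¹ * g) = 1 := by
          rw [map_mul, map_inv, map_mul, ← hab]
          group
        have hmem : (m * nn)⁻¹ * g ∈ C := by rwa [← hker, MonoidHom.mem_ker]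
        refine ⟨m, hm, nn * ((m * nn)⁻¹ * g), mul_mem hn (hCN hmem), ?_⟩
        group
      · right
        obtain ⟨g, rfl⟩ := hπsurj gbar
        refine ⟨g, ?_⟩
        have hcomm : (MulAut.conj (π g)).toMonoidHom.comp π
            = π.comp (MulAut.conj g).toMonoidHom := by
          ext x
          simp [MulAut.conj]
        have hres2 : N.map π = (M.map (MulAut.conj g).toMonoidHom).map π := by
          rw [hres, Subgroup.map_map, Subgroup.map_map, hcomm]
        have hres3 := congrArg (Subgroup.comap π) hres2
        rw [Subgroup.comap_map_eq, Subgroup.comap_map_eq, hker,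
          sup_of_le_left hCN] at hres3
        rw [hres3, sup_of_le_left]
        calc C = Subgroup.map (MulAut.conj g).toMonoidHom C := by
              ext x
              constructor
              · intro hx
                refine ⟨g⁻¹ * x * g, ?_, by simp [MulAut.conj]; group⟩
                have := (‹C.Normal›).conj_mem x hx g⁻¹
                simpa using this
              · rintro ⟨y, hy, rfl⟩
                exact (‹C.Normal›).conj_mem y hy g
        _ ≤ Subgroup.map (MulAut.conj g).toMonoidHom M := Subgroup.map_mono hCM


theorem stmt_16 {G : Type*} [Group G] [Finite G] [Group.IsSolvable G]
    (M N : Subgroup G) (hM : IsCoatom M) (hN : IsCoatom N) :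
    (M : Set G) * (N : Set G) = Set.univ ∨
      ∃ g : G, N = Subgroup.map (MulAut.conj g).toMonoidHom M :=
  ore_aux (Nat.card G) G M N le_rfl hM hN
end

section
/- Let G be a finite group, M a maximal subgroup of G that is not normal, with index [G : M] = n. Then there exist n pairwise distinct subgroups of G (namely the conjugates of M), any two of which have set product not equal to G. In particular, the independence number of the comaximal subgroup graph of G is at least [G : M]. -/
open Pointwise

private lemma conj_map_mul {G : Type*} [Group G] (M : Subgroup G) (a b : G) :
    Subgroup.map (MulAut.conj a).toMonoidHom
      (Subgroup.map (MulAut.conj b).toMonoidHom M)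
      = Subgroup.map (MulAut.conj (a * b)).toMonoidHom M := by
  rw [Subgroup.map_map]
  congr 1
  ext x
  simp [mul_assoc]

private lemma mem_conj_map {G : Type*} [Group G] (M : Subgroup G) (g x : G) :
    x ∈ Subgroup.map (MulAut.conj g).toMonoidHom M ↔ g⁻¹ * x * g ∈ M := by
  constructor
  · rintro ⟨m, hm, rfl⟩
    simpa [mul_assoc] using hm
  · intro h
    exact ⟨g⁻¹ * x * g, h, by simp [mul_assoc]⟩

theorem stmt_17 {G : Type*} [Group G] [Finite G] (M : Subgroup G)
    (hM : IsCoatom M) (hnn : ¬ M.Normal) :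
    ∃ S : Finset (Subgroup G), S.card = M.index ∧
      (∀ H ∈ S, ∃ g : G, H = Subgroup.map (MulAut.conj g).toMonoidHom M) ∧
      ∀ H ∈ S, ∀ K ∈ S, H ≠ K → (H : Set G) * (K : Set G) ≠ Set.univ := by
  classical
  set e : G → Subgroup G := fun g => Subgroup.map (MulAut.conj g).toMonoidHom M with he
  -- normalizer of M is M
  have hN : Subgroup.normalizer (M : Set G) = M := by
    by_contra h
    exact hnn (Subgroup.normalizer_eq_top_iff.mp
      (hM.2 _ (lt_of_le_of_ne Subgroup.le_normalizer (Ne.symm h))))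
  -- e g = M iff g ∈ M
  have heM : ∀ g : G, e g = M ↔ g ∈ M := by
    intro g
    constructor
    · intro h
      have : g ∈ Subgroup.normalizer (M : Set G) := by
        rw [Subgroup.mem_normalizer_iff'']
        intro x
        constructor
        · intro hx
          have hmem : x ∈ e g := h.symm ▸ hx
          exact (mem_conj_map M g x).mp hmem
        · intro hx
          have hmem : x ∈ e g := (mem_conj_map M g x).mpr hx
          rwa [h] at hmem
      rwa [hN] at this
    · intro hg
      ext x
      rw [mem_conj_map]
      have : g ∈ Subgroup.normalizer (M : Set G) := by rw [hN]; exact hg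
      rw [Subgroup.mem_normalizer_iff''] at this
      exact (this x).symm
  -- e a = e b iff a⁻¹ * b ∈ M
  have hinj : ∀ a : G, Function.Injective
      (Subgroup.map (MulAut.conj a).toMonoidHom : Subgroup G → Subgroup G) :=
    fun a => Subgroup.map_injective (MulAut.conj a).injective
  have heq : ∀ a b : G, e a = e b ↔ a⁻¹ * b ∈ M := by
    intro a b
    rw [← heM (a⁻¹ * b)]
    constructor
    · intro h
      apply hinj a
      show Subgroup.map _ (e (a⁻¹ * b)) = Subgroup.map _ M
      rw [he]
      simp only
      rw [conj_map_mul, mul_inv_cancel_left]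
      exact h.symm
    · intro h
      have := congrArg (Subgroup.map (MulAut.conj a).toMonoidHom) h
      rw [he] at this ⊢
      simp only at this ⊢
      rw [conj_map_mul, mul_inv_cancel_left] at this
      exact this.symm
  -- the finset of conjugates, indexed by G ⧸ M
  have : Fintype (G ⧸ M) := Fintype.ofFinite _
  let f : G ⧸ M → Subgroup G := Quotient.lift e (by
    intro a b hab
    exact (heq a b).mpr (QuotientGroup.leftRel_apply.mp hab))
  have hf : Function.Injective f := by
    intro q r h
    obtain ⟨a, rfl⟩ := Quotient.exists_rep q
    obtain ⟨b, rfl⟩ := Quotient.exists_rep r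
    exact Quotient.sound (QuotientGroup.leftRel_apply.mpr ((heq a b).mp h))
  refine ⟨Finset.image f Finset.univ, ?_, ?_, ?_⟩
  · rw [Finset.card_image_of_injective _ hf, Finset.card_univ,
      Subgroup.index, Nat.card_eq_fintype_card]
  · intro H hH
    obtain ⟨q, _, rfl⟩ := Finset.mem_image.mp hH
    obtain ⟨g, rfl⟩ := Quotient.exists_rep q
    exact ⟨g, rfl⟩
  · intro H hH K hK hne hprod
    obtain ⟨q, _, rfl⟩ := Finset.mem_image.mp hH
    obtain ⟨r, _, rfl⟩ := Finset.mem_image.mp hK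
    obtain ⟨a, rfl⟩ := Quotient.exists_rep q
    obtain ⟨b, rfl⟩ := Quotient.exists_rep r
    have hfa : f ⟦a⟧ = e a := rfl
    have hfb : f ⟦b⟧ = e b := rfl
    rw [hfa, hfb] at hprod hne
    -- the element a * b⁻¹ is in the product
    have hmem : a * b⁻¹ ∈ ((e a : Set G) * (e b : Set G)) := by
      rw [hprod]; exact Set.mem_univ _
    obtain ⟨x, hx, y, hy, hxy⟩ := Set.mem_mul.mp hmem
    have hm1 : a⁻¹ * x * a ∈ M := (mem_conj_map M a x).mp hx
    have hm2 : b⁻¹ * y * b ∈ M := (mem_conj_map M b y).mp hy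
    have hkey : a⁻¹ * b = (a⁻¹ * x * a)⁻¹ * (b⁻¹ * y * b)⁻¹ := by
      have hxy' : x * y = a * b⁻¹ := hxy
      have : y = x⁻¹ * (a * b⁻¹) := by
        rw [← hxy']; group
      subst this
      group
    have : a⁻¹ * b ∈ M := hkey ▸ M.mul_mem (M.inv_mem hm1) (M.inv_mem hm2)
    exact hne ((heq a b).mpr this)
end
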